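/- Let h > 0, β ≥ 0, c > 0, and let ω ∈ ℝ be irrational with ‖nω‖_ℤ ≥ c·e^{−βn} for all integers n ≥ 1. Let f : ℝ → ℝ be a 1-periodic function with zero mean ∫₀¹ f(θ)dθ = 0 that is analytic on the strip of width h. Then for every h' with 0 < h' and 2πh' < 2πh − β, there exist a 1-periodic function g : ℝ → ℝ analytic on the strip of width h' and a constant C > 0 depending only on c, β, h, h' such that g(θ + ω) − g(θ) = f(θ) for all θ ∈ ℝ and ‖g‖_{h'} ≤ C·‖f‖_h. -/

import Mathlib

open MeasureTheory Real

/-- Distance from a real number to the nearest integer. -/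
noncomputable def distToInt (x : ℝ) : ℝ := |x - round x|

/-- The open horizontal strip `{z : |Im z| < h}` in the complex plane. -/
def strip (h : ℝ) : Set ℂ := {z : ℂ | |z.im| < h}

/-- The exponential character `z ↦ e^{2πinz}`. -/
noncomputable def Efun (n : ℤ) (z : ℂ) : ℂ := Complex.exp (2 * π * Complex.I * n * z)

lemma Efun_add (n : ℤ) (z w : ℂ) : Efun n (z + w) = Efun n z * Efun n w := by
  rw [Efun, Efun, Efun, ← Complex.exp_add]; ring_nf

lemma Efun_one (n : ℤ) : Efun n 1 = 1 := by
  rw [Efun]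
  rw [show 2 * (π:ℂ) * Complex.I * n * 1 = n * (2 * π * Complex.I) by ring]
  exact Complex.exp_int_mul_two_pi_mul_I n

lemma Efun_abs (n : ℤ) (z : ℂ) : ‖Efun n z‖ = Real.exp (-(2*π) * n * z.im) := by
  rw [Efun, Complex.norm_exp]
  congr 1
  simp [Complex.mul_re, Complex.mul_im]

lemma Efun_conj (n : ℤ) (x : ℝ) :
    (starRingEnd ℂ) (Efun n x) = Efun (-n) x := by
  rw [Efun, Efun, ← Complex.exp_conj]
  congr 1
  push_cast
  simp only [map_mul, Complex.conj_I, Complex.conj_ofReal, map_ofNat, map_intCast, map_neg]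
  ring

lemma Efun_real (n : ℤ) (x : ℝ) : Efun n x = Complex.exp ((2 * π * n * x : ℝ) * Complex.I) := by
  rw [Efun]; congr 1; push_cast; ring

lemma Efun_diff (n : ℤ) : Differentiable ℂ (Efun n) := by
  have : Differentiable ℂ (fun z : ℂ => 2 * π * Complex.I * n * z) :=
    (differentiable_id.const_mul _)
  exact Complex.differentiable_exp.comp this

lemma abs_Efun_sub_one (n : ℤ) (x : ℝ) :
    ‖Efun n x - 1‖ = 2 * |Real.sin (π * n * x)| := by
  rw [Efun_real, Complex.exp_mul_I]
  set s : ℝ := 2 * π * n * x with hs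
  have h1 : Complex.cos (s:ℂ) + Complex.sin (s:ℂ) * Complex.I - 1
      = ((Real.cos s - 1 : ℝ) : ℂ) + ((Real.sin s : ℝ) : ℂ) * Complex.I := by
    push_cast; ring
  rw [h1, Complex.norm_def, Complex.normSq_add_mul_I]
  have h2 : (Real.cos s - 1)^2 + (Real.sin s)^2 = (2 * |Real.sin (π * n * x)|)^2 := by
    have h3 : Real.sin (π * n * x) ^ 2 = 1 / 2 - Real.cos (2 * (π * n * x)) / 2 :=
      Real.sin_sq_eq_half_sub _
    have h4 : (2 : ℝ) * (π * n * x) = s := by rw [hs]; ring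
    rw [h4] at h3
    have h5 := Real.sin_sq_add_cos_sq s
    have h6 : |Real.sin (π * n * x)|^2 = Real.sin (π * n * x) ^ 2 := sq_abs _
    rw [mul_pow, h6, h3]
    nlinarith
  rw [h2, Real.sqrt_sq (by positivity)]

lemma four_dist_le (x : ℝ) : 4 * distToInt x ≤ 2 * |Real.sin (π * x)| := by
  have hπ := Real.pi_pos
  set m : ℤ := round x with hm
  set d : ℝ := x - m with hd
  have hd2 : |d| ≤ 1/2 := abs_sub_round x
  have h1 : |Real.sin (π * x)| = |Real.sin (π * d)| := by
    have : π * x = π * d + m * π := by rw [hd]; ring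
    rw [this, Real.sin_add_int_mul_pi, abs_mul]
    rcases Int.even_or_odd m with he | ho
    · rw [he.neg_one_zpow]; simp
    · rw [ho.neg_one_zpow]; simp
  have h2 : |Real.sin (π * d)| = Real.sin (π * |d|) := by
    rcases abs_cases d with ⟨h, _⟩ | ⟨h, hneg⟩
    · rw [h]
      exact abs_of_nonneg (Real.sin_nonneg_of_nonneg_of_le_pi (by positivity)
        (by nlinarith))
    · rw [h, mul_neg, Real.sin_neg]
      rw [abs_of_nonpos (Real.sin_nonpos_of_nonpos_of_neg_pi_le (by nlinarith) (by nlinarith))]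
  have h3 : 2 / π * (π * |d|) ≤ Real.sin (π * |d|) :=
    Real.mul_le_sin (by positivity) (by nlinarith)
  have h4 : 2 / π * (π * |d|) = 2 * |d| := by
    field_simp
  have : distToInt x = |d| := rfl
  rw [this, h1, h2]
  nlinarith

lemma summable_exp_abs_int {a : ℝ} (ha : 0 < a) :
    Summable (fun n : ℤ => Real.exp (-a * |(n:ℝ)|)) := by
  apply Summable.of_nat_of_neg
  · have : ∀ n : ℕ, Real.exp (-a * |((n:ℤ):ℝ)|) = (Real.exp (-a))^n := by
      intro n
      rw [← Real.exp_nat_mul]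
      congr 1
      push_cast
      rw [abs_of_nonneg (by positivity)]
      ring
    have hg : Summable (fun n : ℕ => (Real.exp (-a))^n) :=
      summable_geometric_of_lt_one (le_of_lt (Real.exp_pos _))
        (by rw [Real.exp_lt_one_iff]; linarith)
    exact hg.congr fun n => (this n).symm
  · have : ∀ n : ℕ, Real.exp (-a * |((-n:ℤ):ℝ)|) = (Real.exp (-a))^n := by
      intro n
      rw [← Real.exp_nat_mul]
      congr 1
      push_cast
      rw [abs_neg, abs_of_nonneg (by positivity)]
      ring
    have hg : Summable (fun n : ℕ => (Real.exp (-a))^n) :=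
      summable_geometric_of_lt_one (le_of_lt (Real.exp_pos _))
        (by rw [Real.exp_lt_one_iff]; linarith)
    exact hg.congr fun n => (this n).symm

lemma intervalIntegral_conj (f : ℝ → ℂ) (a b : ℝ) :
    (starRingEnd ℂ) (∫ x in a..b, f x) = ∫ x in a..b, (starRingEnd ℂ) (f x) := by
  rw [intervalIntegral, intervalIntegral, map_sub, integral_conj, integral_conj]

lemma coeff_decay (h M h₀ : ℝ) (hh₀ : 0 < h₀) (hlt : h₀ < h)
    (F : ℂ → ℂ) (hFdiff : DifferentiableOn ℂ F (strip h))
    (hFper : ∀ z ∈ strip h, F (z + 1) = F z)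
    (hFbd : ∀ z ∈ strip h, ‖F z‖ ≤ M) (n : ℤ) :
    ‖∫ x in (0:ℝ)..1, Efun (-n) x * F x‖
      ≤ M * Real.exp (-(2*π*h₀) * |(n:ℝ)|) := by
  set t : ℝ := if 0 ≤ n then -h₀ else h₀ with hT
  have ht : |t| = h₀ := by
    rw [hT]; split_ifs <;> simp [abs_of_nonneg hh₀.le, abs_of_nonpos (neg_nonpos.mpr hh₀.le)]
  have htlt : |t| < h := by rw [ht]; exact hlt
  have hnt : (2*π) * (n:ℝ) * t = -(2*π*h₀) * |(n:ℝ)| := by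
    rw [hT]; split_ifs with hn
    · rw [abs_of_nonneg (by exact_mod_cast hn : (0:ℝ) ≤ (n:ℝ))]; ring
    · push_neg at hn
      have : (n:ℝ) < 0 := by exact_mod_cast hn
      rw [abs_of_neg this]; ring
  set Φ : ℂ → ℂ := fun z => Efun (-n) z * F z with hΦ
  have hΦdiff : DifferentiableOn ℂ Φ (strip h) :=
    ((Efun_diff (-n)).differentiableOn).mul hFdiff
  have hsub : (Set.uIcc (0:ℝ) 1 ×ℂ Set.uIcc (0:ℝ) t) ⊆ strip h := by
    intro z hz
    rw [Complex.mem_reProdIm] at hz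
    have h2 := hz.2
    rw [Set.mem_uIcc] at h2
    have : |z.im| ≤ |t| := by
      rcases h2 with ⟨h1, h2⟩ | ⟨h1, h2⟩ <;> rcases abs_cases t with ⟨e1, e2⟩ | ⟨e1, e2⟩ <;>
        rcases abs_cases z.im with ⟨f1, f2⟩ | ⟨f1, f2⟩ <;> linarith
    exact lt_of_le_of_lt this htlt
  have key := Complex.integral_boundary_rect_eq_zero_of_differentiableOn Φ 0 (1 + t*Complex.I)
    (by
      refine hΦdiff.mono fun z hz => hsub ?_
      rw [Complex.mem_reProdIm] at hz ⊢
      constructor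
      · simpa using hz.1
      · simpa using hz.2)
  simp only [Complex.add_re, Complex.one_re, Complex.mul_re, Complex.I_re, Complex.ofReal_re,
    Complex.I_im, Complex.ofReal_im, Complex.add_im, Complex.one_im, Complex.mul_im,
    Complex.zero_re, Complex.zero_im, mul_zero, mul_one, zero_mul, sub_zero, add_zero,
    zero_add, smul_eq_mul] at key
  have hvert : (∫ y in (0:ℝ)..t, Φ ((1:ℝ) + y*Complex.I)) = ∫ y in (0:ℝ)..t, Φ ((0:ℝ) + y*Complex.I) := by
    apply intervalIntegral.integral_congr
    intro y hy
    have hyim : |y| ≤ |t| := by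
      rw [Set.mem_uIcc] at hy
      rcases hy with ⟨h1, h2⟩ | ⟨h1, h2⟩ <;> rcases abs_cases t with ⟨e1, e2⟩ | ⟨e1, e2⟩ <;>
        rcases abs_cases y with ⟨f1, f2⟩ | ⟨f1, f2⟩ <;> linarith
    have hmem : (y:ℂ) * Complex.I ∈ strip h := by
      have : ((y:ℂ) * Complex.I).im = y := by simp
      simp only [strip, Set.mem_setOf_eq, this]
      exact lt_of_le_of_lt hyim htlt
    have h1 : ((1:ℝ):ℂ) + (y:ℂ)*Complex.I = ((y:ℂ)*Complex.I) + 1 := by push_cast; ring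
    have h0 : ((0:ℝ):ℂ) + (y:ℂ)*Complex.I = (y:ℂ)*Complex.I := by push_cast; ring
    show Φ (((1:ℝ):ℂ) + (y:ℂ)*Complex.I) = Φ (((0:ℝ):ℂ) + (y:ℂ)*Complex.I)
    rw [h1, h0, hΦ]
    simp only
    rw [Efun_add, Efun_one, mul_one, hFper _ hmem]
  rw [hvert] at key
  have hmain : (∫ x in (0:ℝ)..1, Φ ((x:ℂ) + (0:ℝ)*Complex.I)) = ∫ x in (0:ℝ)..1, Φ ((x:ℂ) + t*Complex.I) := by
    linear_combination key
  have hstart : (∫ x in (0:ℝ)..1, Efun (-n) x * F x) = ∫ x in (0:ℝ)..1, Φ ((x:ℂ) + t*Complex.I) := by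
    rw [← hmain]
    apply intervalIntegral.integral_congr
    intro x _
    simp [hΦ]
  rw [hstart]
  have hbound : ∀ x ∈ Set.uIoc (0:ℝ) 1, ‖Φ ((x:ℂ) + t*Complex.I)‖ ≤ M * Real.exp (-(2*π*h₀) * |(n:ℝ)|) := by
    intro x _
    have him : ((x:ℂ) + t*Complex.I).im = t := by simp
    have hmem : (x:ℂ) + t*Complex.I ∈ strip h := by
      simp only [strip, Set.mem_setOf_eq, him]; exact htlt
    rw [hΦ]
    simp only [norm_mul]
    rw [Efun_abs, him]
    have habs : -(2*π) * ((-n : ℤ):ℝ) * t = -(2*π*h₀) * |(n:ℝ)| := by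
      push_cast
      rw [← hnt]; ring
    rw [habs]
    have hF := hFbd _ hmem
    have he := Real.exp_pos (-(2*π*h₀) * |(n:ℝ)|)
    nlinarith [norm_nonneg (F ((x:ℂ) + t*Complex.I))]
  have := intervalIntegral.norm_integral_le_of_norm_le_const hbound
  simpa using this

theorem statement4 (h β c h' : ℝ) (hh : 0 < h) (hβ : 0 ≤ β) (hc : 0 < c) (hh' : 0 < h')
    (hwidth : 2 * π * h' < 2 * π * h - β) :
    ∃ C > 0, ∀ ω : ℝ, Irrational ω →
      (∀ n : ℕ, 1 ≤ n → c * Real.exp (-(β * n)) ≤ distToInt (n * ω)) →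
      ∀ (f : ℝ → ℝ) (F : ℂ → ℂ) (M : ℝ),
        (∀ x : ℝ, f (x + 1) = f x) →
        (∫ θ in (0:ℝ)..1, f θ) = 0 →
        DifferentiableOn ℂ F (strip h) →
        (∀ z ∈ strip h, F (z + 1) = F z) →
        (∀ x : ℝ, F (x : ℂ) = (f x : ℂ)) →
        (∀ z ∈ strip h, ‖F z‖ ≤ M) →
        ∃ (g : ℝ → ℝ) (G : ℂ → ℂ),
          (∀ x : ℝ, g (x + 1) = g x) ∧
          DifferentiableOn ℂ G (strip h') ∧
          (∀ z ∈ strip h', G (z + 1) = G z) ∧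
          (∀ x : ℝ, G (x : ℂ) = (g x : ℂ)) ∧
          (∀ θ : ℝ, g (θ + ω) - g θ = f θ) ∧
          (∀ z ∈ strip h', ‖G z‖ ≤ C * M) := by
  have hπ := Real.pi_pos
  obtain ⟨δ, hδdef⟩ : ∃ δ : ℝ, δ = h - h' - β / (2*π) := ⟨_, rfl⟩
  have hδ : 0 < δ := by
    have h1 : β / (2*π) < h - h' := by
      rw [div_lt_iff₀ (by positivity)]; nlinarith
    rw [hδdef]; linarith
  obtain ⟨h₀, hh₀def⟩ : ∃ h₀ : ℝ, h₀ = h' + β/(2*π) + δ/2 := ⟨_, rfl⟩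
  have hh₀pos : 0 < h₀ := by rw [hh₀def]; positivity
  have hh₀lt : h₀ < h := by
    have : h₀ = h - δ/2 := by rw [hh₀def, hδdef]; ring
    rw [this]; linarith
  have hexp : 2*π*h₀ - β - 2*π*h' = π*δ := by
    rw [hh₀def, hδdef]; field_simp; ring
  have hS : Summable (fun n : ℤ => Real.exp (-(π*δ) * |(n:ℝ)|)) :=
    summable_exp_abs_int (by positivity)
  obtain ⟨S, hSdef⟩ : ∃ S : ℝ, S = ∑' n : ℤ, Real.exp (-(π*δ) * |(n:ℝ)|) := ⟨_, rfl⟩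
  have hS1 : 1 ≤ S := by
    have h1 := Summable.le_tsum hS 0 (fun j _ => (Real.exp_pos _).le)
    simp only [Int.cast_zero, abs_zero, mul_zero, Real.exp_zero] at h1
    rw [hSdef]
    exact h1
  have hCpos : 0 < 1/(4*c) * S := by positivity
  refine ⟨(1/(4*c)) * S, hCpos, ?_⟩
  intro ω hω hdioph f F M hper hint hFdiff hFper hFreal hFbd
  have hM : 0 ≤ M := le_trans (norm_nonneg _) (hFbd 0 (by simp [strip]; exact hh))
  set fc : ℝ → ℂ := fun x => (f x : ℂ) with hfcdef
  have hfc_per : Function.Periodic fc 1 := fun x => by simp [hfcdef, hper x]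
  have hfc_cont : Continuous fc := by
    have h1 : Continuous (fun x : ℝ => F x) :=
      hFdiff.continuousOn.comp_continuous Complex.continuous_ofReal
        (fun x => by simp [strip]; exact hh)
    simp only [hFreal] at h1
    exact h1
  haveI : Fact ((0:ℝ) < 1) := ⟨one_pos⟩
  have hfl_cont : Continuous (hfc_per.lift : AddCircle (1:ℝ) → ℂ) :=
    hfc_cont.quotient_liftOn' _
  let flc : C(AddCircle (1:ℝ), ℂ) := ⟨hfc_per.lift, hfl_cont⟩
  have hflx : ∀ x : ℝ, (flc : AddCircle (1:ℝ) → ℂ) (x : AddCircle (1:ℝ)) = fc x :=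
    fun x => rfl
  set a : ℤ → ℂ := fun n => ∫ x in (0:ℝ)..1, Efun (-n) x * fc x with hadef
  have hfour : ∀ (n : ℤ) (x : ℝ), (fourier (-n) (x : AddCircle (1:ℝ)) : ℂ) = Efun (-n) x := by
    intro n x
    rw [fourier_coe_apply, Efun]
    congr 1
    push_cast
    ring
  have ha_eq : ∀ n : ℤ, fourierCoeff (flc : AddCircle (1:ℝ) → ℂ) n = a n := by
    intro n
    rw [fourierCoeff_eq_intervalIntegral (flc : AddCircle (1:ℝ) → ℂ) n 0]
    have h1 : ∀ x : ℝ, (fourier (-n) (x : AddCircle (1:ℝ)) : ℂ) • (flc : AddCircle (1:ℝ) → ℂ) (x : AddCircle (1:ℝ))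
        = Efun (-n) x * fc x := by
      intro x
      rw [smul_eq_mul, hfour n x, hflx]
    rw [show (0:ℝ) + 1 = 1 by norm_num]
    rw [intervalIntegral.integral_congr (fun x _ => h1 x)]
    rw [hadef]
    norm_num
  have ha0 : a 0 = 0 := by
    have h1 : ∀ x ∈ Set.uIcc (0:ℝ) 1, Efun (-(0:ℤ)) x * fc x = ((f x : ℂ)) := by
      intro x _
      rw [neg_zero, Efun, hfcdef]
      norm_num
    rw [hadef]
    simp only
    rw [intervalIntegral.integral_congr h1]
    rw [intervalIntegral.integral_ofReal]
    rw [hint]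
    norm_num
  have hdecay : ∀ n : ℤ, ‖a n‖ ≤ M * Real.exp (-(2*π*h₀) * |(n:ℝ)|) := by
    intro n
    have h1 : a n = ∫ x in (0:ℝ)..1, Efun (-n) x * F x := by
      rw [hadef]
      apply intervalIntegral.integral_congr
      intro x _
      simp only [hFreal, hfcdef]
    rw [h1]
    exact coeff_decay h M h₀ hh₀pos hh₀lt F hFdiff hFper hFbd n
  have hax : Summable (fun n : ℤ => ‖a n‖) := by
    refine Summable.of_nonneg_of_le (fun n => norm_nonneg _) (fun n => ?_)
      ((summable_exp_abs_int (by positivity : (0:ℝ) < 2*π*h₀)).mul_left M)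
    exact hdecay n
  have ha_sum : Summable a := hax.of_norm
  have hFourier : ∀ x : ℝ, HasSum (fun n : ℤ => a n * Efun n x) (fc x) := by
    intro x
    have hsummable : Summable (fourierCoeff (flc : AddCircle (1:ℝ) → ℂ)) := by
      have he : (fourierCoeff (flc : AddCircle (1:ℝ) → ℂ)) = fun n => a n := funext ha_eq
      rw [he]; exact ha_sum
    have h1 := has_pointwise_sum_fourier_series_of_summable hsummable (x : AddCircle (1:ℝ))
    have h2 : (fun i : ℤ => fourierCoeff (flc : AddCircle (1:ℝ) → ℂ) i • (fourier i (x : AddCircle (1:ℝ)) : ℂ))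
        = fun n : ℤ => a n * Efun n x := by
      funext n
      rw [ha_eq n, smul_eq_mul]
      congr 1
      have hh2 := hfour (-n) x
      rw [neg_neg] at hh2
      exact hh2
    rw [h2] at h1
    rwa [hflx x] at h1
  -- small divisor bound
  have hden : ∀ n : ℤ, n ≠ 0 → 4 * (c * Real.exp (-β * |(n:ℝ)|)) ≤ ‖Efun n ω - 1‖ := by
    intro n hn
    have hm1 : 1 ≤ n.natAbs := Int.natAbs_pos.mpr hn
    have hnm : |(n:ℝ)| = ((n.natAbs : ℕ):ℝ) := by rw [Nat.cast_natAbs, Int.cast_abs]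
    have hsin : |Real.sin (π * n * ω)| = |Real.sin (π * ((n.natAbs : ℕ):ℝ) * ω)| := by
      rw [← hnm]
      rcases abs_cases ((n:ℝ)) with ⟨he, _⟩ | ⟨he, _⟩
      · rw [he]
      · rw [he, show π * -(n:ℝ) * ω = -(π * (n:ℝ) * ω) by ring, Real.sin_neg, abs_neg]
    have h1 := four_dist_le (((n.natAbs : ℕ):ℝ) * ω)
    have h2 := hdioph n.natAbs hm1
    have h3 : π * (((n.natAbs : ℕ):ℝ) * ω) = π * ((n.natAbs : ℕ):ℝ) * ω := by ring
    rw [h3] at h1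
    rw [abs_Efun_sub_one, hsin]
    have h4 : -(β * ((n.natAbs : ℕ):ℝ)) = -β * |(n:ℝ)| := by rw [hnm]; ring
    rw [h4] at h2
    linarith
  have hden_pos : ∀ n : ℤ, n ≠ 0 → 0 < ‖Efun n ω - 1‖ := by
    intro n hn
    exact lt_of_lt_of_le (by positivity) (hden n hn)
  set b : ℤ → ℂ := fun n => if n = 0 then 0 else a n / (Efun n ω - 1) with hbdef
  set u : ℤ → ℝ := fun n => M/(4*c) * Real.exp (-(π*δ) * |(n:ℝ)|) with hudef
  have hbn : ∀ n : ℤ, b n = if n = 0 then 0 else a n / (Efun n ω - 1) := fun n => rfl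
  have hun : ∀ n : ℤ, u n = M/(4*c) * Real.exp (-(π*δ) * |(n:ℝ)|) := fun n => rfl
  have hu_sum : Summable u := (summable_exp_abs_int (by positivity)).mul_left _
  have hbE : ∀ (n : ℤ), ∀ z ∈ strip h', ‖b n * Efun n z‖ ≤ u n := by
    intro n z hz
    by_cases hn : n = 0
    · subst hn
      have hb0 : b 0 = 0 := by rw [hbn]; simp
      rw [hb0, zero_mul, norm_zero, hun]
      positivity
    · rw [norm_mul, Efun_abs]
      rw [hbn, hun]
      simp only [if_neg hn, norm_div]
      have hzim : |z.im| < h' := hz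
      have hD := hden n hn
      have hDpos : (0:ℝ) < 4 * (c * Real.exp (-β * |(n:ℝ)|)) := by positivity
      have step1 : ‖a n‖ / ‖Efun n ω - 1‖
          ≤ (M * Real.exp (-(2*π*h₀) * |(n:ℝ)|)) / (4 * (c * Real.exp (-β * |(n:ℝ)|))) :=
        div_le_div₀ (by positivity) (hdecay n) hDpos hD
      have step2 : Real.exp (-(2*π) * (n:ℝ) * z.im) ≤ Real.exp ((2*π*h') * |(n:ℝ)|) := by
        apply Real.exp_le_exp.mpr
        have e1 : -((n:ℝ) * z.im) ≤ |(n:ℝ)| * |z.im| := by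
          rw [← abs_mul]
          exact neg_le_abs _
        have e2 : |(n:ℝ)| * |z.im| ≤ |(n:ℝ)| * h' :=
          mul_le_mul_of_nonneg_left hzim.le (abs_nonneg _)
        nlinarith
      have hcomb : ‖a n‖ / ‖Efun n ω - 1‖ * Real.exp (-(2*π) * (n:ℝ) * z.im)
          ≤ (M * Real.exp (-(2*π*h₀) * |(n:ℝ)|)) / (4 * (c * Real.exp (-β * |(n:ℝ)|)))
              * Real.exp ((2*π*h') * |(n:ℝ)|) :=
        mul_le_mul step1 step2 (Real.exp_pos _).le (by positivity)
      refine le_trans hcomb (le_of_eq ?_)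
      have hE : Real.exp (-(2*π*h₀) * |(n:ℝ)|) * Real.exp ((2*π*h') * |(n:ℝ)|)
          = Real.exp (-(π*δ) * |(n:ℝ)|) * Real.exp (-β * |(n:ℝ)|) := by
        rw [← Real.exp_add, ← Real.exp_add]
        congr 1
        linear_combination (-|(n:ℝ)|) * hexp
      rw [div_mul_eq_mul_div,
        div_eq_iff (ne_of_gt (by positivity : (0:ℝ) < 4 * (c * Real.exp (-β * |(n:ℝ)|))))]
      rw [show M/(4*c) * Real.exp (-(π*δ) * |(n:ℝ)|) * (4 * (c * Real.exp (-β * |(n:ℝ)|)))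
            = M * (Real.exp (-(π*δ) * |(n:ℝ)|) * Real.exp (-β * |(n:ℝ)|)) * ((4*c) / (4*c))
          from by ring]
      rw [div_self (ne_of_gt (by positivity : (0:ℝ) < 4*c)), mul_one, ← hE]
      ring
  set G : ℂ → ℂ := fun z => ∑' n : ℤ, b n * Efun n z with hGdef
  have hstrip_open : IsOpen (strip h') :=
    isOpen_lt (continuous_abs.comp Complex.continuous_im) continuous_const
  have hGsum : ∀ z ∈ strip h', Summable (fun n : ℤ => b n * Efun n z) := by
    intro z hz
    apply Summable.of_norm
    exact Summable.of_nonneg_of_le (fun n => norm_nonneg _) (fun n => hbE n z hz) hu_sum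
  have hmemR : ∀ x : ℝ, (x:ℂ) ∈ strip h' := by
    intro x
    simp only [strip, Set.mem_setOf_eq, Complex.ofReal_im, abs_zero]
    exact hh'
  have hGdiff : DifferentiableOn ℂ G (strip h') := by
    rw [hGdef]
    exact Complex.differentiableOn_tsum_of_summable_norm hu_sum
      (fun n => ((Efun_diff n).const_mul (b n)).differentiableOn) hstrip_open
      (fun n w hw => hbE n w hw)
  have hGper : ∀ z : ℂ, G (z + 1) = G z := by
    intro z
    rw [hGdef]
    simp only
    exact tsum_congr fun n => by rw [Efun_add, Efun_one, mul_one]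
  have hGbd : ∀ z ∈ strip h', ‖G z‖ ≤ (1/(4*c) * S) * M := by
    intro z hz
    have h1 : Summable (fun n : ℤ => ‖b n * Efun n z‖) :=
      Summable.of_nonneg_of_le (fun n => norm_nonneg _) (fun n => hbE n z hz) hu_sum
    have h2 : ‖G z‖ ≤ ∑' n : ℤ, ‖b n * Efun n z‖ := norm_tsum_le_tsum_norm h1
    have h3 : (∑' n : ℤ, ‖b n * Efun n z‖) ≤ ∑' n : ℤ, u n :=
      Summable.tsum_le_tsum (fun n => hbE n z hz) h1 hu_sum
    have h4 : (∑' n : ℤ, u n) = M/(4*c) * S := by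
      rw [hudef, tsum_mul_left, hSdef]
    calc ‖G z‖ ≤ ∑' n : ℤ, ‖b n * Efun n z‖ := h2
      _ ≤ ∑' n : ℤ, u n := h3
      _ = M/(4*c) * S := h4
      _ = (1/(4*c) * S) * M := by ring
  have hEconj : ∀ n : ℤ, (starRingEnd ℂ) (Efun n ω - 1) = Efun (-n) ω - 1 := by
    intro n
    rw [map_sub, Efun_conj, map_one]
  have haconj : ∀ n : ℤ, (starRingEnd ℂ) (a n) = a (-n) := by
    intro n
    rw [hadef]
    simp only
    rw [intervalIntegral_conj]
    apply intervalIntegral.integral_congr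
    intro x _
    show (starRingEnd ℂ) (Efun (-n) x * fc x) = Efun (- -n) x * fc x
    rw [map_mul, Efun_conj]
    congr 1
    exact Complex.conj_ofReal _
  have hbconj : ∀ n : ℤ, (starRingEnd ℂ) (b n) = b (-n) := by
    intro n
    rw [hbn n, hbn (-n)]
    by_cases hn : n = 0
    · simp [hn]
    · rw [if_neg hn, if_neg (neg_ne_zero.mpr hn)]
      rw [map_div₀, haconj, hEconj]
  have hGreal : ∀ x : ℝ, (starRingEnd ℂ) (G x) = G x := by
    intro x
    have hs := (hGsum x (hmemR x)).hasSum
    have h1 : HasSum (fun n : ℤ => (starRingEnd ℂ) (b n * Efun n x)) ((starRingEnd ℂ) (G x)) :=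
      Complex.hasSum_conj'.mpr hs
    have h2 : (fun n : ℤ => (starRingEnd ℂ) (b n * Efun n x))
        = (fun n : ℤ => b n * Efun n x) ∘ (Equiv.neg ℤ) := by
      funext n
      simp only [Function.comp_apply, Equiv.neg_apply]
      rw [map_mul, hbconj, Efun_conj]
    rw [h2] at h1
    have h3 : HasSum (fun n : ℤ => b n * Efun n x) ((starRingEnd ℂ) (G x)) :=
      (Equiv.neg ℤ).hasSum_iff.mp h1
    exact h3.unique hs
  set g : ℝ → ℝ := fun x => (G x).re with hgdef
  have hGg : ∀ x : ℝ, G x = ((g x : ℝ) : ℂ) := by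
    intro x
    have him : (G x).im = 0 := Complex.conj_eq_iff_im.mp (hGreal x)
    apply Complex.ext
    · simp [hgdef]
    · simp [him]
  have hEq : ∀ θ : ℝ, G ((θ:ℂ) + (ω:ℂ)) - G (θ:ℂ) = fc θ := by
    intro θ
    have hmem1 : (θ:ℂ) + (ω:ℂ) ∈ strip h' := by
      have : ((θ:ℂ) + (ω:ℂ)) = ((θ + ω : ℝ) : ℂ) := by push_cast; ring
      rw [this]; exact hmemR _
    have hs1 : HasSum (fun n : ℤ => b n * Efun n ((θ:ℂ) + ω)) (G ((θ:ℂ) + ω)) :=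
      (hGsum _ hmem1).hasSum
    have hs2 : HasSum (fun n : ℤ => b n * Efun n (θ:ℂ)) (G (θ:ℂ)) :=
      (hGsum _ (hmemR θ)).hasSum
    have hs3 := hs1.sub hs2
    have h4 : (fun n : ℤ => b n * Efun n ((θ:ℂ) + ω) - b n * Efun n (θ:ℂ))
        = fun n : ℤ => a n * Efun n (θ:ℂ) := by
      funext n
      rw [Efun_add]
      by_cases hn : n = 0
      · subst hn
        have hb0 : b 0 = 0 := by rw [hbn]; simp
        rw [hb0, ha0]
        ring
      · rw [hbn]
        rw [if_neg hn]
        have hne : Efun n ω - 1 ≠ 0 := by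
          intro hcontra
          have := hden_pos n hn
          rw [hcontra] at this
          simp at this
        field_simp
    rw [h4] at hs3
    exact hs3.unique (hFourier θ)
  refine ⟨g, G, ?_, hGdiff, fun z _ => hGper z, fun x => hGg x, ?_, ?_⟩
  · intro x
    rw [hgdef]
    simp only
    have : ((x + 1 : ℝ) : ℂ) = (x:ℂ) + 1 := by push_cast; ring
    rw [this, hGper]
  · intro θ
    have h1 := congrArg Complex.re (hEq θ)
    have h2 : ((θ + ω : ℝ) : ℂ) = (θ:ℂ) + (ω:ℂ) := by push_cast; ring
    rw [hgdef]
    simp only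
    rw [h2]
    rw [Complex.sub_re] at h1
    rw [h1, hfcdef]
    simp
  · exact hGbd
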